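/- arXiv:2109.00034 — 2 statements merged into one kernel-verified Lean document; each statement's English description precedes it below -/
import Mathlib

section
/- Let k be a positive integer and let r_1, r_2, r_3, r_4 ∈ [0, 2π). There exist matrices H_1, H_2, H_3, H_4 ∈ SU(2) with tr(H_i) = 2 cos(r_i/2) satisfying H_4 H_3 H_2 H_1 = 1 if and only if there exists R ∈ [0, 2π) such that |r_1 - r_2| ≤ R ≤ min(r_1 + r_2, 4π - r_1 - r_2) and |r_3 - r_4| ≤ R ≤ min(r_3 + r_4, 4π - r_3 - r_4). -/
open Real Matrix Complex

noncomputable section SU2aux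

/-- generic SU(2) matrix -/
def M2 (a b : ℂ) : Matrix (Fin 2) (Fin 2) ℂ :=
  !![a, b; -(starRingEnd ℂ) b, (starRingEnd ℂ) a]

lemma M2_mul (a b p q : ℂ) :
    M2 a b * M2 p q = M2 (a*p - b * (starRingEnd ℂ) q) (a*q + b * (starRingEnd ℂ) p) := by
  simp only [M2, Matrix.mul_fin_two, map_add, map_sub, map_neg, RingHom.map_mul,
    Complex.conj_conj]
  congr 1 <;> ring

lemma M2_congr {a b a' b' : ℂ} (h1 : a = a') (h2 : b = b') : M2 a b = M2 a' b' := by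
  rw [h1, h2]

lemma M2_one : M2 1 0 = 1 := by
  simp only [M2, map_zero, RingHom.map_one, neg_zero]
  exact (Matrix.one_fin_two).symm

lemma M2_smul (r : ℝ) (a b : ℂ) : M2 ((r:ℂ)*a) ((r:ℂ)*b) = (r:ℂ) • M2 a b := by
  ext i j
  fin_cases i <;> fin_cases j <;> simp [M2]

lemma M2_star (a b : ℂ) : star (M2 a b) = M2 ((starRingEnd ℂ) a) (-b) := by
  ext i j
  fin_cases i <;> fin_cases j <;> simp [M2, Matrix.star_apply]

lemma M2_trace (a b : ℂ) : (M2 a b).trace = ((2 * a.re : ℝ) : ℂ) := by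
  simp only [M2, Matrix.trace_fin_two]
  rw [show (!![a, b; -(starRingEnd ℂ) b, (starRingEnd ℂ) a] : Matrix (Fin 2) (Fin 2) ℂ) 0 0 = a from rfl,
    show (!![a, b; -(starRingEnd ℂ) b, (starRingEnd ℂ) a] : Matrix (Fin 2) (Fin 2) ℂ) 1 1 = (starRingEnd ℂ) a from rfl]
  rw [Complex.add_conj]

lemma M2_det (a b : ℂ) : (M2 a b).det = ((Complex.normSq a + Complex.normSq b : ℝ) : ℂ) := by
  simp only [M2, Matrix.det_fin_two_of]
  rw [show a * (starRingEnd ℂ) a - b * -(starRingEnd ℂ) b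
      = a * (starRingEnd ℂ) a + b * (starRingEnd ℂ) b by ring,
    Complex.mul_conj, Complex.mul_conj]
  push_cast; ring

lemma M2_mem {a b : ℂ} (h : Complex.normSq a + Complex.normSq b = 1) :
    M2 a b ∈ Matrix.specialUnitaryGroup (Fin 2) ℂ := by
  rw [Matrix.mem_specialUnitaryGroup_iff]
  constructor
  · rw [Matrix.mem_unitaryGroup_iff, M2_star, M2_mul]
    rw [show a * (starRingEnd ℂ) a - b * (starRingEnd ℂ) (-b) = ((normSq a + normSq b : ℝ) : ℂ) by
      rw [map_neg, mul_neg, sub_neg_eq_add, Complex.mul_conj, Complex.mul_conj]; push_cast; ring]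
    rw [show a * -b + b * ((starRingEnd ℂ) ((starRingEnd ℂ) a)) = 0 by
      rw [Complex.conj_conj]; ring]
    rw [h]
    simpa using M2_one
  · rw [M2_det, h]; simp

lemma mem_M2 {H : Matrix (Fin 2) (Fin 2) ℂ} (h : H ∈ Matrix.specialUnitaryGroup (Fin 2) ℂ) :
    ∃ a b : ℂ, Complex.normSq a + Complex.normSq b = 1 ∧ H = M2 a b := by
  rw [Matrix.mem_specialUnitaryGroup_iff] at h
  obtain ⟨hu, hdet⟩ := h
  rw [Matrix.mem_unitaryGroup_iff] at hu
  have hu' : star H * H = 1 := mul_eq_one_comm.mp hu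
  have hadj : H * H.adjugate = 1 := by
    rw [Matrix.mul_adjugate, hdet, one_smul]
  have hstar : star H = H.adjugate := by
    calc star H = star H * (H * H.adjugate) := by rw [hadj, mul_one]
    _ = (star H * H) * H.adjugate := by rw [mul_assoc]
    _ = H.adjugate := by rw [hu', one_mul]
  refine ⟨H 0 0, H 0 1, ?_, ?_⟩
  · have := hdet
    rw [Matrix.det_fin_two] at this
    have h10 : (starRingEnd ℂ) (H 0 1) = - H 1 0 := by
      have := congrFun (congrFun hstar 1) 0
      simpa [Matrix.star_apply, Matrix.adjugate_fin_two] using this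
    have h11 : (starRingEnd ℂ) (H 0 0) = H 1 1 := by
      have := congrFun (congrFun hstar 1) 1
      rw [Matrix.star_apply, Matrix.adjugate_fin_two] at this
      simp at this
      rw [← this]; simp
    have : H 0 0 * (starRingEnd ℂ) (H 0 0) + H 0 1 * (starRingEnd ℂ) (H 0 1) = 1 := by
      rw [h10, h11]; rw [← this]; ring
    rw [Complex.mul_conj, Complex.mul_conj] at this
    exact_mod_cast congrArg Complex.re this
  · have h10 : H 1 0 = -(starRingEnd ℂ) (H 0 1) := by
      have := congrFun (congrFun hstar 1) 0
      simp [Matrix.star_apply, Matrix.adjugate_fin_two] at this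
      rw [this]; simp
    have h11 : H 1 1 = (starRingEnd ℂ) (H 0 0) := by
      have := congrFun (congrFun hstar 1) 1
      simp [Matrix.star_apply, Matrix.adjugate_fin_two] at this
      rw [← this, Complex.conj_conj]
    ext i j
    fin_cases i <;> fin_cases j <;> simp [M2, h10, h11]

lemma star_mem_SU2 {H : Matrix (Fin 2) (Fin 2) ℂ}
    (h : H ∈ Matrix.specialUnitaryGroup (Fin 2) ℂ) :
    star H ∈ Matrix.specialUnitaryGroup (Fin 2) ℂ := by
  obtain ⟨a, b, hn, rfl⟩ := mem_M2 h
  rw [M2_star]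
  apply M2_mem
  simpa using hn

lemma cs3 (x1 x2 x3 y1 y2 y3 A B : ℝ) (hA : 0 ≤ A) (hB : 0 ≤ B)
    (hx : x1^2+x2^2+x3^2 = A^2) (hy : y1^2+y2^2+y3^2 = B^2) :
    |x1*y1 + x2*y2 + x3*y3| ≤ A * B := by
  rw [abs_le]
  constructor
  · nlinarith [sq_nonneg (x1*y2 - x2*y1), sq_nonneg (x1*y3 - x3*y1), sq_nonneg (x2*y3 - x3*y2),
      sq_nonneg (x1 + y1), sq_nonneg (x2 + y2), sq_nonneg (x3 + y3), mul_nonneg hA hB,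
      sq_nonneg (A + B)]
  · nlinarith [sq_nonneg (x1*y2 - x2*y1), sq_nonneg (x1*y3 - x3*y1), sq_nonneg (x2*y3 - x3*y2),
      sq_nonneg (x1 - y1), sq_nonneg (x2 - y2), sq_nonneg (x3 - y3), mul_nonneg hA hB,
      sq_nonneg (A - B)]

lemma trace_bound (α β : ℝ) (hsα : 0 ≤ Real.sin α) (hsβ : 0 ≤ Real.sin β)
    (a b p q : ℂ) (ha : Complex.normSq a + Complex.normSq b = 1)
    (hp : Complex.normSq p + Complex.normSq q = 1)
    (hare : a.re = Real.cos α) (hpre : p.re = Real.cos β) :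
    |Real.cos α * Real.cos β - (a*p - b * (starRingEnd ℂ) q).re| ≤ Real.sin α * Real.sin β := by
  have h1 : a.im^2 + b.re^2 + b.im^2 = (Real.sin α)^2 := by
    have := Real.sin_sq_add_cos_sq α
    simp only [Complex.normSq_apply] at ha
    rw [hare] at ha
    nlinarith [ha, this]
  have h2 : p.im^2 + q.re^2 + q.im^2 = (Real.sin β)^2 := by
    have := Real.sin_sq_add_cos_sq β
    simp only [Complex.normSq_apply] at hp
    rw [hpre] at hp
    nlinarith [hp, this]
  have hre : (a*p - b * (starRingEnd ℂ) q).re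
      = Real.cos α * Real.cos β - (a.im*p.im + b.re*q.re + b.im*q.im) := by
    simp [Complex.sub_re, Complex.mul_re, hare, hpre]
    ring
  rw [hre]
  have := cs3 a.im b.re b.im p.im q.re q.im _ _ hsα hsβ h1 h2
  rw [show Real.cos α * Real.cos β - (Real.cos α * Real.cos β - (a.im*p.im + b.re*q.re + b.im*q.im))
    = a.im*p.im + b.re*q.re + b.im*q.im by ring]
  exact this

lemma exists_pair (α β γ : ℝ) (hsα : 0 ≤ Real.sin α) (hsβ : 0 ≤ Real.sin β)
    (h : |Real.cos α * Real.cos β - Real.cos γ| ≤ Real.sin α * Real.sin β) :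
    ∃ a0 b0 a1 b1 : ℂ, Complex.normSq a0 + Complex.normSq b0 = 1 ∧
      Complex.normSq a1 + Complex.normSq b1 = 1 ∧
      a0.re = Real.cos α ∧ a1.re = Real.cos β ∧
      (a1 * a0 - b1 * (starRingEnd ℂ) b0).re = Real.cos γ := by
  set e := Real.cos α * Real.cos β - Real.cos γ with he
  set p := e / Real.sin α with hpdef
  have hps : p * Real.sin α = e := by
    rcases eq_or_ne (Real.sin α) 0 with h0 | h0
    · have : e = 0 := by
        rw [h0, zero_mul] at h
        rcases abs_le.mp h with ⟨h3a, h3b⟩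
        linarith
      rw [this, h0, mul_zero]
    · rw [hpdef]; field_simp
  have hple : p^2 ≤ (Real.sin β)^2 := by
    rcases eq_or_ne (Real.sin α) 0 with h0 | h0
    · have hp0 : p = 0 := by rw [hpdef, h0, div_zero]
      rw [hp0]; nlinarith [sq_nonneg (Real.sin β)]
    · have hα : 0 < Real.sin α := lt_of_le_of_ne hsα (Ne.symm h0)
      have habs : |p| ≤ Real.sin β := by
        rw [hpdef, abs_div, abs_of_pos hα, div_le_iff₀ hα]
        calc |e| ≤ Real.sin α * Real.sin β := h
        _ = Real.sin β * Real.sin α := by ring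
      calc p^2 = |p|^2 := (_root_.sq_abs p).symm
      _ ≤ (Real.sin β)^2 := by nlinarith [abs_nonneg p]
  set qr := Real.sqrt ((Real.sin β)^2 - p^2) with hq
  have hq2 : qr^2 = (Real.sin β)^2 - p^2 := Real.sq_sqrt (by linarith)
  refine ⟨⟨Real.cos α, Real.sin α⟩, 0, ⟨Real.cos β, p⟩, (qr : ℂ), ?_, ?_, rfl, rfl, ?_⟩
  · simp [Complex.normSq_apply]
    nlinarith [Real.sin_sq_add_cos_sq α]
  · simp [Complex.normSq_apply]
    nlinarith [hq2, Real.sin_sq_add_cos_sq β]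
  · simp [Complex.sub_re, Complex.mul_re]
    rw [show Real.cos β * Real.cos α - p * Real.sin α = Real.cos β * Real.cos α - e by rw [hps]]
    rw [he]; ring

lemma diag (c g : ℝ) (hg : 0 ≤ g) (hcg : c^2 + g^2 = 1) (a b : ℂ)
    (h1 : Complex.normSq a + Complex.normSq b = 1) (h2 : a.re = c) :
    ∃ v w : ℂ, Complex.normSq v + Complex.normSq w = 1 ∧
      M2 a b * M2 v w = M2 v w * M2 ((c : ℂ) + (g : ℂ) * Complex.I) 0 := by
  have key : a.im^2 + Complex.normSq b = g^2 := by
    simp only [Complex.normSq_apply] at h1 ⊢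
    rw [h2] at h1
    nlinarith [h1, hcg]
  have haC : a = (c:ℂ) + (a.im:ℂ)*Complex.I := by
    apply Complex.ext <;> simp [h2]
  have habs : |a.im| ≤ g := by
    rw [← Real.sqrt_sq_eq_abs, ← Real.sqrt_sq hg]
    apply Real.sqrt_le_sqrt
    nlinarith [Complex.normSq_nonneg b, key]
  rcases eq_or_ne a.im g with hsg | hsg
  · have hb0 : b = 0 := by
      have : Complex.normSq b = 0 := by nlinarith [key, hsg]
      exact Complex.normSq_eq_zero.mp this
    refine ⟨1, 0, by simp, ?_⟩
    have haE : M2 a b = M2 ((c:ℂ) + (g:ℂ)*Complex.I) 0 :=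
      M2_congr (by rw [haC, hsg]) hb0
    rw [haE, M2_one, mul_one, one_mul]
  · have hslt : a.im < g :=
      lt_of_le_of_ne (le_trans (le_abs_self _) habs) hsg
    have hgpos : 0 < g := by
      rcases lt_or_eq_of_le hg with h | h
      · exact h
      · exfalso; apply hsg; nlinarith [neg_abs_le a.im, le_abs_self a.im, habs]
    have htpos : 0 < g - a.im := by linarith
    have hnpos : 0 < Real.sqrt (2*g*(g - a.im)) := Real.sqrt_pos.mpr (by positivity)
    have hn2 : (Real.sqrt (2*g*(g - a.im)))^2 = 2*g*(g - a.im) := Real.sq_sqrt (by positivity)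
    have hnC : ((Real.sqrt (2*g*(g - a.im)) : ℝ):ℂ) ≠ 0 := by exact_mod_cast hnpos.ne'
    have hbb : b * (starRingEnd ℂ) b = ((g:ℂ) - (a.im:ℂ))*((g:ℂ) + (a.im:ℂ)) := by
      rw [Complex.mul_conj]
      rw [show (Complex.normSq b : ℂ) = ((g^2 - a.im^2 : ℝ) : ℂ) by norm_cast; linarith [key]]
      push_cast; ring
    have hcE : (starRingEnd ℂ) ((c:ℂ) + (g:ℂ)*Complex.I) = (c:ℂ) - (g:ℂ)*Complex.I := by
      simp [Complex.ext_iff]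
    have E1 : a * b - b * (starRingEnd ℂ) (((g - a.im : ℝ):ℂ)*Complex.I)
        = b * ((c:ℂ) + (g:ℂ)*Complex.I)
          - (((g - a.im : ℝ):ℂ)*Complex.I) * (starRingEnd ℂ) 0 := by
      rw [show (starRingEnd ℂ) (((g - a.im : ℝ):ℂ)*Complex.I)
          = -(((g - a.im : ℝ):ℂ)*Complex.I) by simp, map_zero]
      push_cast
      linear_combination b * haC
    have E2 : a * (((g - a.im : ℝ):ℂ)*Complex.I) + b * (starRingEnd ℂ) b
        = (((g - a.im : ℝ):ℂ)*Complex.I) * (starRingEnd ℂ) ((c:ℂ) + (g:ℂ)*Complex.I) := by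
      rw [hcE, hbb]
      push_cast
      linear_combination (((g:ℂ)-(a.im:ℂ))*Complex.I) * haC + (((g:ℂ) - (a.im:ℂ))*((g:ℂ)+(a.im:ℂ))) * Complex.I_sq
    have key2 : M2 a b * M2 b (((g - a.im : ℝ):ℂ)*Complex.I)
        = M2 b (((g - a.im : ℝ):ℂ)*Complex.I) * M2 ((c:ℂ) + (g:ℂ)*Complex.I) 0 := by
      rw [M2_mul, M2_mul]
      exact M2_congr E1 (by rw [mul_zero, zero_add]; exact E2)
    refine ⟨b / (Real.sqrt (2*g*(g - a.im)) : ℂ),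
      (((g - a.im : ℝ):ℂ)*Complex.I) / (Real.sqrt (2*g*(g - a.im)) : ℂ), ?_, ?_⟩
    · rw [Complex.normSq_div, Complex.normSq_div]
      rw [Complex.normSq_mul, Complex.normSq_I]
      rw [Complex.normSq_ofReal, Complex.normSq_ofReal]
      rw [← add_div]
      rw [div_eq_one_iff_eq (by positivity)]
      nlinarith [key, hn2]
    · have hv : b / ((Real.sqrt (2*g*(g - a.im)) : ℝ):ℂ)
          = (((Real.sqrt (2*g*(g - a.im)))⁻¹ : ℝ):ℂ) * b := by push_cast; field_simp
      have hw : (((g - a.im : ℝ):ℂ)*Complex.I) / ((Real.sqrt (2*g*(g - a.im)) : ℝ):ℂ)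
          = (((Real.sqrt (2*g*(g - a.im)))⁻¹ : ℝ):ℂ) * (((g - a.im : ℝ):ℂ)*Complex.I) := by
        push_cast; field_simp
      rw [hv, hw, M2_smul]
      rw [Matrix.mul_smul, Matrix.smul_mul, key2]

lemma normSq_prod {a b p q : ℂ} (h : Complex.normSq a + Complex.normSq b = 1)
    (h' : Complex.normSq p + Complex.normSq q = 1) :
    Complex.normSq (a*p - b*(starRingEnd ℂ) q) + Complex.normSq (a*q + b*(starRingEnd ℂ) p) = 1 := by
  have := congrArg Matrix.det (M2_mul a b p q)
  rw [Matrix.det_mul, M2_det, M2_det, M2_det, h, h'] at this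
  have : ((Complex.normSq (a*p - b*(starRingEnd ℂ) q)
      + Complex.normSq (a*q + b*(starRingEnd ℂ) p) : ℝ) : ℂ) = ((1:ℝ):ℂ) := by
    rw [← this]; push_cast; ring
  exact_mod_cast this

lemma cos_mono_rev {x y : ℝ} (hx : 0 ≤ x) (hx' : x ≤ π) (hy : 0 ≤ y) (hy' : y ≤ π)
    (h : Real.cos x ≤ Real.cos y) : y ≤ x := by
  by_contra h'
  push_neg at h'
  have := Real.strictAntiOn_cos ⟨hx, hx'⟩ ⟨hy, hy'⟩ h'
  linarith

end SU2aux

lemma cos_min_half (x : ℝ) (hx0 : 0 ≤ x) (hx4 : x ≤ 4*π) :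
    Real.cos ((min x (4*π - x))/2) = Real.cos (x/2) := by
  rcases le_total x (2*π) with h | h
  · rw [min_eq_left (by linarith)]
  · rw [min_eq_right (by linarith), show (4*π - x)/2 = 2*π - x/2 by ring, Real.cos_two_pi_sub]

lemma min_half_bounds (x : ℝ) (h0 : 0 ≤ x) (h4 : x ≤ 4*π) :
    0 ≤ min x (4*π-x) ∧ min x (4*π-x) ≤ 2*π := by
  constructor
  · exact le_min h0 (by linarith)
  · rcases le_total x (2*π) with h | h
    · exact le_trans (min_le_left _ _) h
    · exact le_trans (min_le_right _ _) (by linarith)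

lemma cos_abs_half (x : ℝ) : Real.cos (|x|/2) = Real.cos (x/2) := by
  rw [show |x|/2 = |x/2| by rw [abs_div]; norm_num, Real.cos_abs]

set_option maxHeartbeats 1000000 in
theorem su2_product_trace_condition (k : ℕ) (hk : 0 < k)
    (r : Fin 4 → ℝ) (hr : ∀ i, r i ∈ Set.Ico 0 (2 * π)) :
    (∃ H : Fin 4 → Matrix (Fin 2) (Fin 2) ℂ,
        (∀ i, H i ∈ Matrix.specialUnitaryGroup (Fin 2) ℂ) ∧
        (∀ i, (H i).trace = (2 * Real.cos (r i / 2) : ℝ)) ∧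
        H 3 * H 2 * H 1 * H 0 = 1)
    ↔ (∃ R ∈ Set.Ico 0 (2 * π),
        |r 0 - r 1| ≤ R ∧ R ≤ min (r 0 + r 1) (4 * π - r 0 - r 1) ∧
        |r 2 - r 3| ≤ R ∧ R ≤ min (r 2 + r 3) (4 * π - r 2 - r 3)) := by
  have hpi := Real.pi_pos
  have hr0 : ∀ i, 0 ≤ r i := fun i => (hr i).1
  have hr2 : ∀ i, r i < 2*π := fun i => (hr i).2
  have hsin : ∀ i, 0 ≤ Real.sin (r i / 2) := fun i =>
    Real.sin_nonneg_of_nonneg_of_le_pi (by linarith [hr0 i]) (by linarith [hr2 i])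
  have hhalf : ∀ i, r i / 2 ≤ π := fun i => by linarith [hr2 i]
  constructor
  · rintro ⟨H, hmem, htr, hprod⟩
    obtain ⟨a0, b0, hn0, hH0⟩ := mem_M2 (hmem 0)
    obtain ⟨a1, b1, hn1, hH1⟩ := mem_M2 (hmem 1)
    obtain ⟨a2, b2, hn2, hH2⟩ := mem_M2 (hmem 2)
    obtain ⟨a3, b3, hn3, hH3⟩ := mem_M2 (hmem 3)
    have hre : ∀ (i : Fin 4) (a b : ℂ), H i = M2 a b → a.re = Real.cos (r i / 2) := by
      intro i a b hHi
      have := htr i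
      rw [hHi, M2_trace] at this
      have := Complex.ofReal_inj.mp this
      linarith
    have hre0 := hre 0 a0 b0 hH0
    have hre1 := hre 1 a1 b1 hH1
    have hre2 := hre 2 a2 b2 hH2
    have hre3 := hre 3 a3 b3 hH3
    have hM : H 1 * H 0 = M2 (a1*a0 - b1*(starRingEnd ℂ) b0) (a1*b0 + b1*(starRingEnd ℂ) a0) := by
      rw [hH1, hH0, M2_mul]
    have hN : H 3 * H 2 = M2 (a3*a2 - b3*(starRingEnd ℂ) b2) (a3*b2 + b3*(starRingEnd ℂ) a2) := by
      rw [hH3, hH2, M2_mul]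
    have hNM : (H 3 * H 2) * (H 1 * H 0) = 1 := by
      rw [← mul_assoc, mul_assoc (H 3 * H 2)]
      rw [← mul_assoc]
      exact hprod
    have hNmem : H 3 * H 2 ∈ Matrix.specialUnitaryGroup (Fin 2) ℂ := mul_mem (hmem 3) (hmem 2)
    have hstarN : star (H 3 * H 2) * (H 3 * H 2) = 1 :=
      Matrix.mem_unitaryGroup_iff'.mp (Matrix.mem_specialUnitaryGroup_iff.mp hNmem).1
    have hMeq : H 1 * H 0 = star (H 3 * H 2) := by
      calc H 1 * H 0 = (star (H 3 * H 2) * (H 3 * H 2)) * (H 1 * H 0) := by rw [hstarN, one_mul]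
      _ = star (H 3 * H 2) * ((H 3 * H 2) * (H 1 * H 0)) := by rw [mul_assoc]
      _ = star (H 3 * H 2) := by rw [hNM, mul_one]
    have hA_eq : (a1*a0 - b1*(starRingEnd ℂ) b0)
        = (starRingEnd ℂ) (a3*a2 - b3*(starRingEnd ℂ) b2) := by
      have h' : M2 (a1*a0 - b1*(starRingEnd ℂ) b0) (a1*b0 + b1*(starRingEnd ℂ) a0)
          = M2 ((starRingEnd ℂ) (a3*a2 - b3*(starRingEnd ℂ) b2))
            (-(a3*b2 + b3*(starRingEnd ℂ) a2)) := by
        rw [← hM, ← M2_star, ← hN, hMeq]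
      exact congrFun (congrFun h' 0) 0
    set x := (a1*a0 - b1*(starRingEnd ℂ) b0).re with hx
    have hxC : (a3*a2 - b3*(starRingEnd ℂ) b2).re = x := by
      rw [hx, hA_eq, Complex.conj_re]
    have hb01 := trace_bound (r 1 / 2) (r 0 / 2) (hsin 1) (hsin 0) a1 b1 a0 b0 hn1 hn0 hre1 hre0
    have hb23 := trace_bound (r 3 / 2) (r 2 / 2) (hsin 3) (hsin 2) a3 b3 a2 b2 hn3 hn2 hre3 hre2
    rw [hxC] at hb23
    rw [← hx] at hb01
    have l01 : Real.cos ((r 0 + r 1)/2) ≤ x := by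
      rcases abs_le.mp hb01 with ⟨h1, h2⟩
      rw [show (r 0 + r 1)/2 = r 1/2 + r 0/2 by ring, Real.cos_add]; linarith
    have u01 : x ≤ Real.cos ((r 0 - r 1)/2) := by
      rcases abs_le.mp hb01 with ⟨h1, h2⟩
      rw [show (r 0 - r 1)/2 = -(r 1/2 - r 0/2) by ring, Real.cos_neg, Real.cos_sub]; linarith
    have l23 : Real.cos ((r 2 + r 3)/2) ≤ x := by
      rcases abs_le.mp hb23 with ⟨h1, h2⟩
      rw [show (r 2 + r 3)/2 = r 3/2 + r 2/2 by ring, Real.cos_add]; linarith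
    have u23 : x ≤ Real.cos ((r 2 - r 3)/2) := by
      rcases abs_le.mp hb23 with ⟨h1, h2⟩
      rw [show (r 2 - r 3)/2 = -(r 3/2 - r 2/2) by ring, Real.cos_neg, Real.cos_sub]; linarith
    -- cross bounds via cos monotonicity
    have habs01 : |r 0 - r 1| < 2*π := abs_lt.mpr ⟨by linarith [hr0 0, hr0 1, hr2 0, hr2 1],
      by linarith [hr0 0, hr0 1, hr2 0, hr2 1]⟩
    have habs23 : |r 2 - r 3| < 2*π := abs_lt.mpr ⟨by linarith [hr0 2, hr0 3, hr2 2, hr2 3],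
      by linarith [hr0 2, hr0 3, hr2 2, hr2 3]⟩
    have hmin01 := min_half_bounds (r 0 + r 1) (by linarith [hr0 0, hr0 1])
      (by linarith [hr2 0, hr2 1])
    have hmin23 := min_half_bounds (r 2 + r 3) (by linarith [hr0 2, hr0 3])
      (by linarith [hr2 2, hr2 3])
    have cross1 : |r 2 - r 3| ≤ min (r 0 + r 1) (4*π - (r 0 + r 1)) := by
      have hcc : Real.cos ((min (r 0 + r 1) (4*π - (r 0 + r 1)))/2)
          ≤ Real.cos (|r 2 - r 3|/2) := by
        rw [cos_min_half _ (by linarith [hr0 0, hr0 1]) (by linarith [hr2 0, hr2 1]),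
          cos_abs_half]
        linarith [l01, u23]
      have key : (min (r 0 + r 1) (4*π - (r 0 + r 1)))/2 ≥ |r 2 - r 3|/2 := by
        refine cos_mono_rev ?_ ?_ ?_ ?_ hcc
        · linarith [hmin01.1]
        · linarith [hmin01.2]
        · linarith [abs_nonneg (r 2 - r 3)]
        · linarith [habs23]
      linarith
    have cross2 : |r 0 - r 1| ≤ min (r 2 + r 3) (4*π - (r 2 + r 3)) := by
      have hcc : Real.cos ((min (r 2 + r 3) (4*π - (r 2 + r 3)))/2)
          ≤ Real.cos (|r 0 - r 1|/2) := by
        rw [cos_min_half _ (by linarith [hr0 2, hr0 3]) (by linarith [hr2 2, hr2 3]),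
          cos_abs_half]
        linarith [l23, u01]
      have key : (min (r 2 + r 3) (4*π - (r 2 + r 3)))/2 ≥ |r 0 - r 1|/2 := by
        refine cos_mono_rev ?_ ?_ ?_ ?_ hcc
        · linarith [hmin23.1]
        · linarith [hmin23.2]
        · linarith [abs_nonneg (r 0 - r 1)]
        · linarith [habs01]
      linarith
    have self1 : |r 0 - r 1| ≤ min (r 0 + r 1) (4*π - (r 0 + r 1)) :=
      le_min (abs_le.mpr ⟨by linarith [hr0 0, hr0 1], by linarith [hr0 0, hr0 1]⟩)
        (abs_le.mpr ⟨by linarith [hr2 0, hr2 1], by linarith [hr2 0, hr2 1]⟩)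
    have self2 : |r 2 - r 3| ≤ min (r 2 + r 3) (4*π - (r 2 + r 3)) :=
      le_min (abs_le.mpr ⟨by linarith [hr0 2, hr0 3], by linarith [hr0 2, hr0 3]⟩)
        (abs_le.mpr ⟨by linarith [hr2 2, hr2 3], by linarith [hr2 2, hr2 3]⟩)
    refine ⟨max |r 0 - r 1| |r 2 - r 3|, ⟨le_trans (abs_nonneg _) (le_max_left _ _),
      max_lt habs01 habs23⟩, le_max_left _ _, ?_, le_max_right _ _, ?_⟩
    · rw [show 4*π - r 0 - r 1 = 4*π - (r 0 + r 1) by ring]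
      exact max_le self1 cross1
    · rw [show 4*π - r 2 - r 3 = 4*π - (r 2 + r 3) by ring]
      exact max_le cross2 self2
  · rintro ⟨R, ⟨hR0, hR2⟩, h01l, h01u, h23l, h23u⟩
    have hsR : 0 ≤ Real.sin (R/2) :=
      Real.sin_nonneg_of_nonneg_of_le_pi (by linarith) (by linarith)
    have hcsR : (Real.cos (R/2))^2 + (Real.sin (R/2))^2 = 1 := by
      nlinarith [Real.sin_sq_add_cos_sq (R/2)]
    -- angle hypotheses for the two pairs
    have hyp : ∀ i j : Fin 4, |r i - r j| ≤ R → R ≤ min (r i + r j) (4*π - r i - r j) →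
        |Real.cos (r i / 2) * Real.cos (r j / 2) - Real.cos (R/2)|
          ≤ Real.sin (r i / 2) * Real.sin (r j / 2) := by
      intro i j hlo hhi
      have habsij : |r i - r j| < 2*π := abs_lt.mpr ⟨by linarith [hr0 i, hr0 j, hr2 i, hr2 j],
        by linarith [hr0 i, hr0 j, hr2 i, hr2 j]⟩
      have hminb := min_half_bounds (r i + r j) (by linarith [hr0 i, hr0 j])
        (by linarith [hr2 i, hr2 j])
      have hhi' : R ≤ min (r i + r j) (4*π - (r i + r j)) := by
        rw [show 4*π - (r i + r j) = 4*π - r i - r j by ring]; exact hhi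
      have hup : Real.cos (R/2) ≤ Real.cos ((r i - r j)/2) := by
        rw [← cos_abs_half (r i - r j)]
        refine Real.cos_le_cos_of_nonneg_of_le_pi ?_ ?_ ?_
        · linarith [abs_nonneg (r i - r j)]
        · linarith
        · linarith [hlo]
      have hlow : Real.cos ((r i + r j)/2) ≤ Real.cos (R/2) := by
        rw [← cos_min_half (r i + r j) (by linarith [hr0 i, hr0 j]) (by linarith [hr2 i, hr2 j])]
        refine Real.cos_le_cos_of_nonneg_of_le_pi ?_ ?_ ?_
        · linarith
        · linarith [hminb.2]
        · linarith [hhi']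
      rw [show (r i + r j)/2 = r i/2 + r j/2 by ring, Real.cos_add] at hlow
      rw [show (r i - r j)/2 = r i/2 - r j/2 by ring, Real.cos_sub] at hup
      rw [abs_le]
      constructor <;> linarith
    have hyp01 := hyp 0 1 h01l h01u
    have hyp23 := hyp 2 3 h23l h23u
    obtain ⟨a0, b0, a1, b1, hn0, hn1, hre0, hre1, hA⟩ :=
      exists_pair (r 0/2) (r 1/2) (R/2) (hsin 0) (hsin 1) hyp01
    obtain ⟨c0, d0, c1, d1, hm0, hm1, hce0, hce1, hC⟩ :=
      exists_pair (r 2/2) (r 3/2) (R/2) (hsin 2) (hsin 3) hyp23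
    set A := a1*a0 - b1*(starRingEnd ℂ) b0 with hAdef
    set B := a1*b0 + b1*(starRingEnd ℂ) a0 with hBdef
    set C := c1*c0 - d1*(starRingEnd ℂ) d0 with hCdef
    set D := c1*d0 + d1*(starRingEnd ℂ) c0 with hDdef
    have hMn : Complex.normSq A + Complex.normSq B = 1 := normSq_prod hn1 hn0
    have hNn : Complex.normSq C + Complex.normSq D = 1 := normSq_prod hm1 hm0
    obtain ⟨v', w', hVn, hVeq⟩ := diag (Real.cos (R/2)) (Real.sin (R/2)) hsR hcsR
      ((starRingEnd ℂ) A) (-B)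
      (by rw [Complex.normSq_conj, Complex.normSq_neg]; exact hMn)
      (by rw [Complex.conj_re]; exact hA)
    obtain ⟨v, w, hWn, hWeq⟩ := diag (Real.cos (R/2)) (Real.sin (R/2)) hsR hcsR C D hNn hC
    set V := M2 v' w' with hVdef
    set W := M2 v w with hWdef
    set U := V * star W with hUdef
    have hVmem := M2_mem hVn
    have hWmem := M2_mem hWn
    have hUmem : U ∈ Matrix.specialUnitaryGroup (Fin 2) ℂ := mul_mem hVmem (star_mem_SU2 hWmem)
    have uV : V * star V = 1 :=
      Matrix.mem_unitaryGroup_iff.mp (Matrix.mem_specialUnitaryGroup_iff.mp hVmem).1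
    have uW : star W * W = 1 :=
      Matrix.mem_unitaryGroup_iff'.mp (Matrix.mem_specialUnitaryGroup_iff.mp hWmem).1
    have uU : star U * U = 1 :=
      Matrix.mem_unitaryGroup_iff'.mp (Matrix.mem_specialUnitaryGroup_iff.mp hUmem).1
    set Dg := M2 ((Real.cos (R/2) : ℂ) + (Real.sin (R/2) : ℂ) * Complex.I) 0 with hDgdef
    have hMmem : M2 A B ∈ Matrix.specialUnitaryGroup (Fin 2) ℂ := M2_mem hMn
    have uM : star (M2 A B) * (M2 A B) = 1 :=
      Matrix.mem_unitaryGroup_iff'.mp (Matrix.mem_specialUnitaryGroup_iff.mp hMmem).1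
    have e1 : star (M2 A B) = V * Dg * star V := by
      rw [M2_star]
      calc M2 ((starRingEnd ℂ) A) (-B)
          = M2 ((starRingEnd ℂ) A) (-B) * (V * star V) := by rw [uV, mul_one]
      _ = (M2 ((starRingEnd ℂ) A) (-B) * V) * star V := by rw [mul_assoc]
      _ = (V * Dg) * star V := by rw [hVeq]
    have e2 : Dg = star W * M2 C D * W := by
      calc Dg = (star W * W) * Dg := by rw [uW, one_mul]
      _ = star W * (W * Dg) := by rw [mul_assoc]
      _ = star W * (M2 C D * W) := by rw [hWeq]
      _ = star W * M2 C D * W := by rw [mul_assoc]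
    have hstarU : star U = W * star V := by
      rw [hUdef, Matrix.star_mul, star_star]
    have e3 : star (M2 A B) = U * M2 C D * star U := by
      rw [e1, e2, hstarU, hUdef]
      simp only [mul_assoc]
    -- the four matrices
    set K0 := M2 a0 b0 with hK0
    set K1 := M2 a1 b1 with hK1
    set K2 := U * M2 c0 d0 * star U with hK2
    set K3 := U * M2 c1 d1 * star U with hK3
    have ev0 : (![K0, K1, K2, K3] : Fin 4 → Matrix (Fin 2) (Fin 2) ℂ) 0 = K0 := rfl
    have ev1 : (![K0, K1, K2, K3] : Fin 4 → Matrix (Fin 2) (Fin 2) ℂ) 1 = K1 := rfl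
    have ev2 : (![K0, K1, K2, K3] : Fin 4 → Matrix (Fin 2) (Fin 2) ℂ) 2 = K2 := rfl
    have ev3 : (![K0, K1, K2, K3] : Fin 4 → Matrix (Fin 2) (Fin 2) ℂ) 3 = K3 := rfl
    have tconj : ∀ X : Matrix (Fin 2) (Fin 2) ℂ, (U * X * star U).trace = X.trace := by
      intro X
      rw [Matrix.trace_mul_cycle, uU, one_mul]
    refine ⟨![K0, K1, K2, K3], ?_, ?_, ?_⟩
    · intro i
      fin_cases i
      · exact M2_mem hn0
      · exact M2_mem hn1
      · exact mul_mem (mul_mem hUmem (M2_mem hm0)) (star_mem_SU2 hUmem)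
      · exact mul_mem (mul_mem hUmem (M2_mem hm1)) (star_mem_SU2 hUmem)
    · intro i
      fin_cases i
      · show (M2 a0 b0).trace = _
        rw [M2_trace, hre0]; rfl
      · show (M2 a1 b1).trace = _
        rw [M2_trace, hre1]; rfl
      · show (U * M2 c0 d0 * star U).trace = _
        rw [tconj, M2_trace, hce0]; rfl
      · show (U * M2 c1 d1 * star U).trace = _
        rw [tconj, M2_trace, hce1]; rfl
    · have cancel : ∀ X : Matrix (Fin 2) (Fin 2) ℂ, star U * (U * X) = X := by
        intro X
        rw [← mul_assoc, uU, one_mul]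
      have hH32 : K3 * K2 = star (M2 A B) := by
        rw [hK3, hK2]
        have step : (U * M2 c1 d1 * star U) * (U * M2 c0 d0 * star U)
            = U * (M2 c1 d1 * M2 c0 d0) * star U := by
          rw [show (U * M2 c1 d1 * star U) * (U * M2 c0 d0 * star U)
              = U * M2 c1 d1 * (star U * U) * (M2 c0 d0 * star U) by simp only [mul_assoc],
            uU, mul_one]
          simp only [mul_assoc]
        rw [step, M2_mul, e3]
      show K3 * K2 * K1 * K0 = 1
      rw [mul_assoc _ K1 K0, hH32, hK1, hK0, M2_mul]
      exact uM
end

section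
/- Fix a positive integer k. The coherent states ξ_{(x,y)} on V_k ≅ ℂ^k defined by ξ_{(x,y)}(m) = (2/k)^{1/4} e^{−ikxy/(4π)} Σ_{n∈ℤ} e^{−(k/(4π))(2πm/k − 2πn − x)²} e^{−(ik/(2π)) y (2πm/k − 2πn − x)} satisfy the over-completeness relation (k/(4π²)) ∫_{[0,2π)²} ξ_{(x,y)}(m) · conj(ξ_{(x,y)}(m')) dx dy = δ_{m,m'} for all m, m' ∈ ℤ/kℤ. -/
open Real MeasureTheory

/-- A single term of the coherent-state series on `V_k`. -/
noncomputable def xiTerm (k : ℕ) (x y : ℝ) (m : ZMod k) (n : ℤ) : ℂ :=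
  ((Real.exp (-(k / (4 * π)) * (2 * π * (m.val : ℝ) / k - 2 * π * n - x) ^ 2) : ℝ) : ℂ) *
    Complex.exp (-Complex.I * ((k : ℂ) / (2 * π)) * (y : ℂ) *
      ((2 * π * (m.val : ℝ) / k - 2 * π * n - x : ℝ) : ℂ))

/-- The coherent state `ξ_{(x,y)}(m)` on `V_k ≅ ℂ^k`. -/
noncomputable def xi (k : ℕ) (x y : ℝ) (m : ZMod k) : ℂ :=
  (((2 / (k : ℝ)) ^ ((1 : ℝ) / 4) : ℝ) : ℂ) *
    Complex.exp (-Complex.I * (k : ℂ) * (x : ℂ) * (y : ℂ) / (4 * π)) *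
    ∑' n : ℤ, xiTerm k x y m n

open Set


noncomputable def Ac (k : ℕ) (m : ZMod k) (n : ℤ) (x : ℝ) : ℝ :=
  2 * π * (m.val : ℝ) / k - 2 * π * n - x

lemma xiTerm_eq (k : ℕ) (x y : ℝ) (m : ZMod k) (n : ℤ) :
    xiTerm k x y m n = ((Real.exp (-((k:ℝ) / (4 * π)) * (Ac k m n x) ^ 2) : ℝ) : ℂ) *
      Complex.exp (-Complex.I * ((k : ℂ) / (2 * π)) * (y : ℂ) * ((Ac k m n x : ℝ) : ℂ)) := rfl

lemma norm_xiTerm (k : ℕ) (x y : ℝ) (m : ZMod k) (n : ℤ) :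
    ‖xiTerm k x y m n‖ = Real.exp (-((k:ℝ) / (4 * π)) * (Ac k m n x) ^ 2) := by
  rw [xiTerm_eq, norm_mul, Complex.norm_real, Real.norm_of_nonneg (Real.exp_pos _).le]
  have h : -Complex.I * ((k : ℂ) / (2 * π)) * (y : ℂ) * ((Ac k m n x : ℝ) : ℂ)
      = ((-((k:ℝ) / (2 * π) * y * Ac k m n x) : ℝ) : ℂ) * Complex.I := by
    push_cast; ring
  rw [h, Complex.norm_exp]
  rw [Complex.re_ofReal_mul]
  simp

lemma summable_gauss (q c x : ℝ) (hq : 0 < q) :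
    Summable fun n : ℤ => Real.exp (-q * (c - 2 * π * n - x) ^ 2) := by
  have h4q : (0:ℝ) < 4 * q := by positivity
  refine (summable_pow_mul_jacobiTheta₂_term_bound (2 * q * |c - x|) h4q 0).of_nonneg_of_le
    (fun n => (Real.exp_pos _).le) (fun n => ?_)
  rw [pow_zero, one_mul, Real.exp_le_exp]
  have habs : (c - x) * n ≤ |c - x| * |(n:ℝ)| := (le_abs_self _).trans (abs_mul _ _).le
  have h1 : (0:ℝ) ≤ |c - x| * |(n:ℝ)| - (c - x) * n := by linarith
  have h2 : ((|n| : ℤ) : ℝ) = |(n:ℝ)| := by push_cast; ring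
  rw [h2]
  have hpi1 : (1:ℝ) ≤ π := by linarith [Real.pi_gt_three]
  nlinarith [mul_nonneg hq.le (sq_nonneg (c - x)), pi_pos, mul_pos pi_pos hq,
    mul_nonneg (mul_pos pi_pos hq).le h1,
    mul_nonneg (mul_nonneg (mul_nonneg pi_pos.le hq.le) (sub_nonneg.2 hpi1)) (sq_nonneg (n:ℝ))]

lemma integral_cexp_ico (r : ℤ) :
    ∫ y in Set.Ico (0:ℝ) (2*π), Complex.exp (-Complex.I * (r:ℂ) * (y:ℂ))
      = if r = 0 then ((2*π:ℝ):ℂ) else 0 := by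
  have h2pi : (0:ℝ) ≤ 2*π := by positivity
  rw [integral_Ico_eq_integral_Ioo, ← integral_Ioc_eq_integral_Ioo,
    ← intervalIntegral.integral_of_le h2pi]
  rcases eq_or_ne r 0 with h | h
  · simp [h, two_mul]
  · rw [if_neg h]
    have hc : (-Complex.I * (r:ℂ)) ≠ 0 :=
      mul_ne_zero (neg_ne_zero.2 Complex.I_ne_zero) (by exact_mod_cast h)
    have key := integral_exp_mul_complex (a := 0) (b := 2*π) hc
    simp only [mul_assoc] at key ⊢
    rw [key]
    have h1 : (-Complex.I * ((r:ℂ) * ((2*π:ℝ):ℂ))) = ((-r : ℤ):ℂ) * (2*π*Complex.I) := by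
      push_cast; ring
    rw [h1, Complex.exp_int_mul_two_pi_mul_I]
    norm_num

lemma integral_term (k : ℕ) (hk : 0 < k) (m m' : ZMod k) (x : ℝ) (p : ℤ × ℤ) :
    ∫ y in Set.Ico (0:ℝ) (2*π),
        xiTerm k x y m p.1 * (starRingEnd ℂ) (xiTerm k x y m' p.2)
      = if ((m.val : ℤ) - m'.val) = k * (p.1 - p.2) then
          ((2*π:ℝ):ℂ) * ((Real.exp (-((k:ℝ) / (4 * π)) * (Ac k m p.1 x) ^ 2) : ℝ) : ℂ) *
            ((Real.exp (-((k:ℝ) / (4 * π)) * (Ac k m' p.2 x) ^ 2) : ℝ) : ℂ)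
        else 0 := by
  have hkR : ((k:ℝ)) ≠ 0 := Nat.cast_ne_zero.2 hk.ne'
  set r : ℤ := ((m.val : ℤ) - m'.val) - k * (p.1 - p.2) with hr
  set G : ℝ := Real.exp (-((k:ℝ) / (4 * π)) * (Ac k m p.1 x) ^ 2) with hG
  set G' : ℝ := Real.exp (-((k:ℝ) / (4 * π)) * (Ac k m' p.2 x) ^ 2) with hG'
  have hreal : ((k:ℝ) / (2 * π)) * (Ac k m p.1 x - Ac k m' p.2 x)
      = ((m.val : ℝ) - m'.val) - k * (p.1 - p.2) := by
    simp only [Ac]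
    field_simp
    ring
  have hC : ((k:ℂ) / (2 * (π:ℂ))) * ((Ac k m p.1 x : ℂ) - (Ac k m' p.2 x : ℂ)) = (r:ℂ) := by
    have h2 := congrArg (fun t : ℝ => (t : ℂ)) hreal
    rw [hr]
    push_cast at h2 ⊢
    linear_combination h2
  have key : ∀ y : ℝ, xiTerm k x y m p.1 * (starRingEnd ℂ) (xiTerm k x y m' p.2)
      = ((G:ℂ) * (G':ℂ)) * Complex.exp (-Complex.I * (r:ℂ) * (y:ℂ)) := by
    intro y
    rw [xiTerm_eq, xiTerm_eq, map_mul, Complex.conj_ofReal, ← Complex.exp_conj]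
    have hconj : (starRingEnd ℂ) (-Complex.I * ((k : ℂ) / (2 * π)) * (y : ℂ) *
        ((Ac k m' p.2 x : ℝ) : ℂ)) = Complex.I * ((k : ℂ) / (2 * π)) * (y : ℂ) *
        ((Ac k m' p.2 x : ℝ) : ℂ) := by
      simp [map_mul, map_div₀, Complex.conj_ofReal, Complex.conj_I, map_ofNat]
    rw [hconj, mul_mul_mul_comm, ← Complex.exp_add, ← hG, ← hG']
    have harg : (-Complex.I * ((k : ℂ) / (2 * π)) * (y : ℂ) * ((Ac k m p.1 x : ℝ) : ℂ)) +
        (Complex.I * ((k : ℂ) / (2 * π)) * (y : ℂ) * ((Ac k m' p.2 x : ℝ) : ℂ))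
        = -Complex.I * (r:ℂ) * (y:ℂ) := by
      linear_combination (-Complex.I * (y:ℂ)) * hC
    rw [harg]
  simp only [key]
  rw [MeasureTheory.integral_const_mul, integral_cexp_ico]
  by_cases h : ((m.val : ℤ) - m'.val) = (k:ℤ) * (p.1 - p.2)
  · rw [if_pos (sub_eq_zero_of_eq h), if_pos h]
    ring
  · rw [if_neg (fun h0 => h (sub_eq_zero.mp h0)), if_neg h, mul_zero]

lemma summable_norm_xiTerm (k : ℕ) (hk : 0 < k) (x y : ℝ) (m : ZMod k) :
    Summable fun n : ℤ => ‖xiTerm k x y m n‖ := by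
  simp only [norm_xiTerm]
  exact summable_gauss ((k:ℝ)/(4*π)) (2 * π * (m.val : ℝ) / k) x (by positivity)

lemma xi_mul_conj (k : ℕ) (hk : 0 < k) (m m' : ZMod k) (x y : ℝ) :
    xi k x y m * (starRingEnd ℂ) (xi k x y m')
      = (((2 / (k : ℝ)) ^ ((1 : ℝ) / 2) : ℝ) : ℂ) *
        ∑' p : ℤ × ℤ, xiTerm k x y m p.1 * (starRingEnd ℂ) (xiTerm k x y m' p.2) := by
  have hb : (0:ℝ) < 2 / (k:ℝ) := by positivity
  unfold xi
  rw [map_mul, map_mul, Complex.conj_ofReal, ← Complex.exp_conj]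
  have hph : (starRingEnd ℂ) (-Complex.I * (k : ℂ) * (x : ℂ) * (y : ℂ) / (4 * π))
      = -(-Complex.I * (k : ℂ) * (x : ℂ) * (y : ℂ) / (4 * π)) := by
    simp [map_div₀, map_mul, Complex.conj_ofReal, Complex.conj_I, map_ofNat]
    ring
  rw [hph]
  have hconj_tsum : (starRingEnd ℂ) (∑' n : ℤ, xiTerm k x y m' n)
      = ∑' n : ℤ, (starRingEnd ℂ) (xiTerm k x y m' n) := by
    simp only [starRingEnd_apply]
    exact tsum_star
  rw [hconj_tsum]
  have hprod : (∑' n : ℤ, xiTerm k x y m n) * (∑' n : ℤ, (starRingEnd ℂ) (xiTerm k x y m' n))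
      = ∑' p : ℤ × ℤ, xiTerm k x y m p.1 * (starRingEnd ℂ) (xiTerm k x y m' p.2) := by
    refine tsum_mul_tsum_of_summable_norm (summable_norm_xiTerm k hk x y m) ?_
    simpa only [RCLike.norm_conj] using summable_norm_xiTerm k hk x y m'
  have hcc : (((2 / (k : ℝ)) ^ ((1:ℝ)/4) : ℝ) : ℂ) * (((2 / (k : ℝ)) ^ ((1:ℝ)/4) : ℝ) : ℂ)
      = (((2 / (k : ℝ)) ^ ((1:ℝ)/2) : ℝ) : ℂ) := by
    rw [← Complex.ofReal_mul, ← Real.rpow_add hb]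
    norm_num
  calc (((2 / (k : ℝ)) ^ ((1:ℝ)/4) : ℝ) : ℂ) *
        Complex.exp (-Complex.I * (k : ℂ) * (x : ℂ) * (y : ℂ) / (4 * π)) *
        (∑' n : ℤ, xiTerm k x y m n) *
        ((((2 / (k : ℝ)) ^ ((1:ℝ)/4) : ℝ) : ℂ) *
          Complex.exp (-(-Complex.I * (k : ℂ) * (x : ℂ) * (y : ℂ) / (4 * π))) *
          ∑' n : ℤ, (starRingEnd ℂ) (xiTerm k x y m' n))
      = ((((2 / (k : ℝ)) ^ ((1:ℝ)/4) : ℝ) : ℂ) * (((2 / (k : ℝ)) ^ ((1:ℝ)/4) : ℝ) : ℂ)) *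
        (Complex.exp (-Complex.I * (k : ℂ) * (x : ℂ) * (y : ℂ) / (4 * π)) *
          Complex.exp (-(-Complex.I * (k : ℂ) * (x : ℂ) * (y : ℂ) / (4 * π)))) *
        ((∑' n : ℤ, xiTerm k x y m n) * ∑' n : ℤ, (starRingEnd ℂ) (xiTerm k x y m' n)) := by
        ring
    _ = _ := by
        rw [← Complex.exp_add, add_neg_cancel, Complex.exp_zero, mul_one, hcc, hprod]

lemma cont_xiTerm (k : ℕ) (x : ℝ) (m : ZMod k) (n : ℤ) :
    Continuous fun y : ℝ => xiTerm k x y m n := by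
  unfold xiTerm
  fun_prop

lemma summable_gauss_Ac (k : ℕ) (q : ℝ) (hq : 0 < q) (m : ZMod k) (x : ℝ) :
    Summable fun n : ℤ => Real.exp (-q * (Ac k m n x) ^ 2) := by
  simp only [Ac]
  exact summable_gauss q (2 * π * (m.val : ℝ) / k) x hq

lemma inner_int (k : ℕ) (hk : 0 < k) (m m' : ZMod k) (x : ℝ) :
    ∫ y in Set.Ico (0:ℝ) (2*π), xi k x y m * (starRingEnd ℂ) (xi k x y m')
      = (((2 / (k : ℝ)) ^ ((1 : ℝ) / 2) : ℝ) : ℂ) *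
        ∑' p : ℤ × ℤ, (if ((m.val : ℤ) - m'.val) = k * (p.1 - p.2) then
          ((2*π:ℝ):ℂ) * ((Real.exp (-((k:ℝ) / (4 * π)) * (Ac k m p.1 x) ^ 2) : ℝ) : ℂ) *
            ((Real.exp (-((k:ℝ) / (4 * π)) * (Ac k m' p.2 x) ^ 2) : ℝ) : ℂ)
        else 0) := by
  simp only [xi_mul_conj k hk m m']
  rw [MeasureTheory.integral_const_mul]
  congr 1
  have hint : ∀ p : ℤ × ℤ, Integrable
      (fun y => xiTerm k x y m p.1 * (starRingEnd ℂ) (xiTerm k x y m' p.2))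
      (volume.restrict (Set.Ico (0:ℝ) (2*π))) := by
    intro p
    have hc : Continuous fun y : ℝ =>
        xiTerm k x y m p.1 * (starRingEnd ℂ) (xiTerm k x y m' p.2) :=
      (cont_xiTerm k x m p.1).mul (continuous_star.comp (cont_xiTerm k x m' p.2))
    exact (hc.integrableOn_Icc).mono_set Set.Ico_subset_Icc_self
  have hnormval : ∀ p : ℤ × ℤ, (∫ y in Set.Ico (0:ℝ) (2*π),
      ‖xiTerm k x y m p.1 * (starRingEnd ℂ) (xiTerm k x y m' p.2)‖)
      = (2*π) * (Real.exp (-((k:ℝ) / (4 * π)) * (Ac k m p.1 x) ^ 2) *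
          Real.exp (-((k:ℝ) / (4 * π)) * (Ac k m' p.2 x) ^ 2)) := by
    intro p
    have : ∀ y : ℝ, ‖xiTerm k x y m p.1 * (starRingEnd ℂ) (xiTerm k x y m' p.2)‖
        = Real.exp (-((k:ℝ) / (4 * π)) * (Ac k m p.1 x) ^ 2) *
          Real.exp (-((k:ℝ) / (4 * π)) * (Ac k m' p.2 x) ^ 2) := by
      intro y
      rw [norm_mul, RCLike.norm_conj, norm_xiTerm, norm_xiTerm]
    simp only [this]
    rw [MeasureTheory.setIntegral_const,
      Real.volume_real_Ico_of_le (by linarith [Real.pi_pos] : (0:ℝ) ≤ 2*π), smul_eq_mul]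
    ring_nf
  have hsum : Summable fun p : ℤ × ℤ => ∫ y in Set.Ico (0:ℝ) (2*π),
      ‖xiTerm k x y m p.1 * (starRingEnd ℂ) (xiTerm k x y m' p.2)‖ := by
    simp only [hnormval]
    refine Summable.mul_left _ ?_
    have h1 := summable_gauss_Ac k ((k:ℝ)/(4*π)) (div_pos (by exact_mod_cast hk) (by positivity)) m x
    have h2 := summable_gauss_Ac k ((k:ℝ)/(4*π)) (div_pos (by exact_mod_cast hk) (by positivity)) m' x
    exact h1.mul_of_nonneg h2 (fun n => (Real.exp_pos _).le) (fun n => (Real.exp_pos _).le)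
  rw [← MeasureTheory.integral_tsum_of_summable_integral_norm hint hsum]
  exact tsum_congr (fun p => integral_term k hk m m' x p)

lemma term_int_eq (k : ℕ) (m : ZMod k) (n : ℤ) :
    ∫ x in Set.Ico (0:ℝ) (2*π), Real.exp (-((k:ℝ)/(2*π)) * (Ac k m n x)^2)
      = ∫ u in Set.Ioc (2*π*(n:ℝ) - 2*π*(m.val:ℝ)/k) (2*π*((n:ℝ)+1) - 2*π*(m.val:ℝ)/k),
          Real.exp (-((k:ℝ)/(2*π)) * u^2) := by
  set b : ℝ := 2*π*(m.val:ℝ)/k with hb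
  set q : ℝ := (k:ℝ)/(2*π) with hq
  have h2pi : (0:ℝ) ≤ 2*π := by positivity
  have h1 : ∀ x : ℝ, -q * (Ac k m n x)^2 = -q * (x - (b - 2*π*n))^2 := by
    intro x
    have : Ac k m n x = b - 2*π*n - x := by simp only [Ac, hb]
    rw [this]; ring
  simp only [h1]
  rw [integral_Ico_eq_integral_Ioo, ← integral_Ioc_eq_integral_Ioo,
    ← intervalIntegral.integral_of_le h2pi,
    intervalIntegral.integral_comp_sub_right (fun u => Real.exp (-q * u^2)) (b - 2*π*n),
    intervalIntegral.integral_of_le (by linarith : (0:ℝ) - (b - 2*π*n) ≤ 2*π - (b - 2*π*n))]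
  congr 1 <;> ring

lemma union_Ioc (b : ℝ) :
    (⋃ n : ℤ, Set.Ioc (2*π*(n:ℝ) - b) (2*π*((n:ℝ)+1) - b)) = Set.univ := by
  have h2pi : (0:ℝ) < 2*π := by positivity
  ext u
  simp only [Set.mem_iUnion, Set.mem_Ioc, Set.mem_univ, iff_true]
  set v : ℝ := (u + b)/(2*π) with hv
  have hvv : 2*π*v = u + b := by rw [hv]; field_simp
  refine ⟨⌈v⌉ - 1, ?_, ?_⟩
  · have h2 : ((⌈v⌉:ℝ) - 1) < v := by linarith [Int.ceil_lt_add_one v]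
    have h3 : 2*π*((⌈v⌉:ℝ) - 1) < 2*π*v := by nlinarith
    push_cast
    linarith [hvv ▸ h3]
  · have h2 : v ≤ ((⌈v⌉:ℝ)) := Int.le_ceil v
    have h3 : 2*π*v ≤ 2*π*(⌈v⌉:ℝ) := by nlinarith
    push_cast
    linarith [hvv ▸ h3]

lemma hasSum_gauss_int (k : ℕ) (hk : 0 < k) (m : ZMod k) :
    HasSum (fun n : ℤ => ∫ x in Set.Ico (0:ℝ) (2*π),
        Real.exp (-((k:ℝ)/(2*π)) * (Ac k m n x)^2))
      (Real.sqrt (π / ((k:ℝ)/(2*π)))) := by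
  set b : ℝ := 2*π*(m.val:ℝ)/k with hb
  set q : ℝ := (k:ℝ)/(2*π) with hq
  have hqpos : 0 < q := div_pos (by exact_mod_cast hk) (by positivity)
  have hInt : Integrable (fun u : ℝ => Real.exp (-q * u^2)) := integrable_exp_neg_mul_sq hqpos
  set s : ℤ → Set ℝ := fun n => Set.Ioc (2*π*(n:ℝ) - b) (2*π*((n:ℝ)+1) - b) with hs
  have hm : ∀ n : ℤ, MeasurableSet (s n) := fun n => measurableSet_Ioc
  have hd : Pairwise (Function.onFun Disjoint s) := by
    intro i j hij
    have key : ∀ a c : ℤ, a < c → (2*π*((a:ℝ)+1) - b) ≤ (2*π*(c:ℝ) - b) := by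
      intro a c hac
      have : (a:ℝ) + 1 ≤ c := by exact_mod_cast hac
      nlinarith [Real.pi_pos]
    rcases lt_or_gt_of_ne hij with h | h
    · exact Set.Ioc_disjoint_Ioc.2 (le_trans (min_le_left _ _)
        ((key i j h).trans (le_max_right _ _)))
    · exact Set.Ioc_disjoint_Ioc.2 (le_trans (min_le_right _ _)
        ((key j i h).trans (le_max_left _ _)))
  have hfi : IntegrableOn (fun u : ℝ => Real.exp (-q * u^2)) (⋃ n : ℤ, s n) :=
    hInt.integrableOn
  have hsum := MeasureTheory.hasSum_integral_iUnion hm hd hfi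
  rw [hs] at hsum
  simp only [union_Ioc b] at hsum
  rw [MeasureTheory.setIntegral_univ, integral_gaussian] at hsum
  have hterm : ∀ n : ℤ, ∫ x in Set.Ico (0:ℝ) (2*π), Real.exp (-q * (Ac k m n x)^2)
      = ∫ x in Set.Ioc (2*π*(n:ℝ) - b) (2*π*((n:ℝ)+1) - b), Real.exp (-q * x^2) :=
    fun n => term_int_eq k m n
  simpa only [hterm] using hsum

theorem xi_overcompleteness (k : ℕ) (hk : 0 < k) (m m' : ZMod k) :
    ((k : ℂ) / (4 * π ^ 2)) *
        ∫ x in Set.Ico (0 : ℝ) (2 * π), ∫ y in Set.Ico (0 : ℝ) (2 * π),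
          xi k x y m * (starRingEnd ℂ) (xi k x y m')
      = if m = m' then 1 else 0 := by
  haveI : NeZero k := ⟨hk.ne'⟩
  have hπ : (π:ℝ) ≠ 0 := Real.pi_ne_zero
  have hkR : ((k:ℝ)) ≠ 0 := Nat.cast_ne_zero.2 hk.ne'
  by_cases hmm' : m = m'
  · subst hmm'
    rw [if_pos rfl]
    -- diagonal simplification of the tsum
    have hcond : ∀ p : ℤ × ℤ, (((m.val:ℤ) - m.val = (k:ℤ) * (p.1 - p.2))) ↔ p.1 = p.2 := by
      intro p
      constructor
      · intro h
        have hk0 : (k:ℤ) ≠ 0 := Int.natCast_ne_zero.2 hk.ne'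
        have h2 : (k:ℤ) * (p.1 - p.2) = 0 := by omega
        have h3 : p.1 - p.2 = 0 := by
          rcases mul_eq_zero.1 h2 with h | h
          · exact absurd h hk0
          · exact h
        omega
      · intro h; rw [h]; ring
    have hGG : ∀ (n : ℤ) (x : ℝ),
        ((Real.exp (-((k:ℝ) / (4 * π)) * (Ac k m n x) ^ 2) : ℝ) : ℂ) *
          ((Real.exp (-((k:ℝ) / (4 * π)) * (Ac k m n x) ^ 2) : ℝ) : ℂ)
        = ((Real.exp (-((k:ℝ) / (2 * π)) * (Ac k m n x) ^ 2) : ℝ) : ℂ) := by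
      intro n x
      rw [← Complex.ofReal_mul, ← Real.exp_add]
      congr 2
      field_simp
      ring
    have hdiag : ∀ x : ℝ,
        (∑' p : ℤ × ℤ, (if ((m.val : ℤ) - m.val) = k * (p.1 - p.2) then
          ((2*π:ℝ):ℂ) * ((Real.exp (-((k:ℝ) / (4 * π)) * (Ac k m p.1 x) ^ 2) : ℝ) : ℂ) *
            ((Real.exp (-((k:ℝ) / (4 * π)) * (Ac k m p.2 x) ^ 2) : ℝ) : ℂ)
        else 0))
        = ((2*π:ℝ):ℂ) * ∑' n : ℤ, ((Real.exp (-((k:ℝ) / (2 * π)) * (Ac k m n x) ^ 2) : ℝ) : ℂ) := by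
      intro x
      simp only [hcond]
      rw [← Function.Injective.tsum_eq (g := fun n : ℤ => ((n, n) : ℤ × ℤ))
        (fun a b h => (Prod.ext_iff.1 h).1) ?_]
      · rw [← tsum_mul_left]
        refine tsum_congr fun n => ?_
        rw [if_pos rfl, mul_assoc, hGG n x]
      · intro p hp
        rcases eq_or_ne p.1 p.2 with h | h
        · exact ⟨p.1, Prod.ext rfl h⟩
        · exact absurd (if_neg h) hp
    simp only [inner_int k hk m m, hdiag]
    -- pull out constants from the x-integral
    simp only [← mul_assoc]
    rw [MeasureTheory.integral_const_mul]
    -- swap integral and tsum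
    set q : ℝ := (k:ℝ)/(2*π) with hq
    have hqpos : 0 < q := div_pos (by exact_mod_cast hk) (by positivity)
    have hint : ∀ n : ℤ, Integrable
        (fun x : ℝ => ((Real.exp (-q * (Ac k m n x) ^ 2) : ℝ) : ℂ))
        (volume.restrict (Set.Ico (0:ℝ) (2*π))) := by
      intro n
      have hc : Continuous fun x : ℝ => ((Real.exp (-q * (Ac k m n x) ^ 2) : ℝ) : ℂ) := by
        unfold Ac; fun_prop
      exact (hc.integrableOn_Icc).mono_set Set.Ico_subset_Icc_self
    have hreal := hasSum_gauss_int k hk m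
    have hnorm : ∀ n : ℤ, (∫ x in Set.Ico (0:ℝ) (2*π),
        ‖((Real.exp (-q * (Ac k m n x) ^ 2) : ℝ) : ℂ)‖)
        = ∫ x in Set.Ico (0:ℝ) (2*π), Real.exp (-q * (Ac k m n x) ^ 2) := by
      intro n
      refine setIntegral_congr_fun measurableSet_Ico fun x _ => ?_
      rw [Complex.norm_real, Real.norm_of_nonneg (Real.exp_pos _).le]
    have hsumnorm : Summable fun n : ℤ => ∫ x in Set.Ico (0:ℝ) (2*π),
        ‖((Real.exp (-q * (Ac k m n x) ^ 2) : ℝ) : ℂ)‖ := by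
      simp only [hnorm]
      exact hreal.summable
    rw [← MeasureTheory.integral_tsum_of_summable_integral_norm hint hsumnorm]
    have hcast : ∀ n : ℤ, (∫ x in Set.Ico (0:ℝ) (2*π),
        ((Real.exp (-q * (Ac k m n x) ^ 2) : ℝ) : ℂ))
        = ((∫ x in Set.Ico (0:ℝ) (2*π), Real.exp (-q * (Ac k m n x) ^ 2) : ℝ) : ℂ) := by
      intro n
      exact integral_ofReal
    simp only [hcast]
    have hCsum : HasSum (fun n : ℤ => ((∫ x in Set.Ico (0:ℝ) (2*π),
        Real.exp (-q * (Ac k m n x) ^ 2) : ℝ) : ℂ)) ((Real.sqrt (π / q) : ℝ) : ℂ) :=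
      (Complex.ofRealCLM : ℝ →L[ℝ] ℂ).hasSum hreal
    rw [hCsum.tsum_eq]
    -- final arithmetic
    have hfin : (k:ℝ) / (4 * π^2) * ((2 / (k:ℝ)) ^ ((1:ℝ)/2) * (2*π) * Real.sqrt (π / q)) = 1 := by
      have h1 : (2 / (k:ℝ)) ^ ((1:ℝ)/2) = Real.sqrt (2 / (k:ℝ)) := (Real.sqrt_eq_rpow _).symm
      have h2 : Real.sqrt (2 / (k:ℝ)) * Real.sqrt (π / q) = 2*π/(k:ℝ) := by
        rw [← Real.sqrt_mul (by positivity)]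
        rw [show (2 / (k:ℝ)) * (π / q) = (2*π/(k:ℝ))^2 by rw [hq]; field_simp]
        exact Real.sqrt_sq (by positivity)
      rw [h1]
      calc (k:ℝ) / (4 * π^2) * (Real.sqrt (2 / (k:ℝ)) * (2*π) * Real.sqrt (π / q))
          = (k:ℝ) / (4 * π^2) * (2*π) * (Real.sqrt (2 / (k:ℝ)) * Real.sqrt (π / q)) := by ring
        _ = (k:ℝ) / (4 * π^2) * (2*π) * (2*π/(k:ℝ)) := by rw [h2]
        _ = 1 := by field_simp; ring
    calc ((k:ℂ) / (4 * (π:ℂ)^2)) * ((((2 / (k:ℝ)) ^ ((1:ℝ)/2) : ℝ):ℂ) * (((2*π:ℝ)):ℂ) *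
          ((Real.sqrt (π / q) : ℝ) : ℂ))
        = (((k:ℝ) / (4 * π^2) * ((2 / (k:ℝ)) ^ ((1:ℝ)/2) * (2*π) * Real.sqrt (π / q)) : ℝ) : ℂ) := by
          push_cast; ring
      _ = 1 := by rw [hfin]; norm_num
  · rw [if_neg hmm']
    have hzero : ∀ (x : ℝ) (p : ℤ × ℤ), ¬(((m.val:ℤ) - m'.val) = (k:ℤ) * (p.1 - p.2)) := by
      intro x p h
      have h1 : (k:ℤ) ∣ ((m.val:ℤ) - m'.val) := ⟨p.1 - p.2, h⟩
      have h2 : |(m.val:ℤ) - (m'.val:ℤ)| < k := by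
        have hv1 := ZMod.val_lt m
        have hv2 := ZMod.val_lt m'
        rw [abs_lt]
        omega
      have h3 : ((m.val:ℤ) - m'.val) = 0 := by
        by_contra h0
        have h4 : (k:ℤ) ≤ |(m.val:ℤ) - m'.val| :=
          Int.le_of_dvd (abs_pos.2 h0) ((dvd_abs _ _).2 h1)
        omega
      have h5 : m.val = m'.val := by omega
      exact hmm' (ZMod.val_injective k h5)
    have h1 : ∀ x : ℝ,
        (((2 / (k : ℝ)) ^ ((1 : ℝ) / 2) : ℝ) : ℂ) *
        (∑' p : ℤ × ℤ, (if ((m.val : ℤ) - m'.val) = k * (p.1 - p.2) then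
          ((2*π:ℝ):ℂ) * ((Real.exp (-((k:ℝ) / (4 * π)) * (Ac k m p.1 x) ^ 2) : ℝ) : ℂ) *
            ((Real.exp (-((k:ℝ) / (4 * π)) * (Ac k m' p.2 x) ^ 2) : ℝ) : ℂ)
        else 0)) = 0 := by
      intro x
      have : ∀ p : ℤ × ℤ, (if ((m.val : ℤ) - m'.val) = k * (p.1 - p.2) then
          ((2*π:ℝ):ℂ) * ((Real.exp (-((k:ℝ) / (4 * π)) * (Ac k m p.1 x) ^ 2) : ℝ) : ℂ) *
            ((Real.exp (-((k:ℝ) / (4 * π)) * (Ac k m' p.2 x) ^ 2) : ℝ) : ℂ)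
        else 0) = 0 := fun p => if_neg (hzero x p)
      simp only [this, tsum_zero, mul_zero]
    simp only [inner_int k hk m m', h1, MeasureTheory.integral_zero, mul_zero]
end
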